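/- For any element w of a finite Weyl group W acting on a Euclidean space V, the sum over W of det(id - w) equals |W|. -/

import Mathlib

local notation "⟪" x ", " y "⟫_ℝ" => @inner ℝ _ _ x y

noncomputable section

variable {V : Type*} [NormedAddCommGroup V] [InnerProductSpace ℝ V] [FiniteDimensional ℝ V]

/-- `w` is an orthogonal reflection in a linear hyperplane. -/
def IsHyperplaneReflection (w : V ≃ₗᵢ[ℝ] V) : Prop :=
  ∃ v : V, v ≠ 0 ∧ w = Submodule.reflection (ℝ ∙ v)ᗮ

/-- Scaling the entries of a multilinear map inside a finset by a scalar `c` multiplies the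
value by `c ^ S.card`. -/
private lemma aux_pw_smul {n : ℕ} (f : MultilinearMap ℝ (fun _ : Fin n => V) ℝ)
    (c : ℝ) (m : Fin n → V) (S : Finset (Fin n)) :
    ∀ m' : Fin n → V,
      f (S.piecewise (fun i => c • m i) m') = c ^ S.card * f (S.piecewise m m') := by
  classical
  induction S using Finset.induction_on with
  | empty => intro m'; simp
  | @insert j S hj ih =>
    intro m'
    rw [Finset.piecewise_insert, Finset.piecewise_insert,
      Finset.update_piecewise_of_notMem _ _ _ hj,
      Finset.update_piecewise_of_notMem _ _ _ hj]
    have h1 : f (S.piecewise (fun i => c • m i) (Function.update m' j (c • m j)))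
        = c • f (S.piecewise (fun i => c • m i) (Function.update m' j (m j))) := by
      rw [← Finset.update_piecewise_of_notMem _ _ _ hj,
        ← Finset.update_piecewise_of_notMem _ _ _ hj]
      exact f.map_update_smul _ j c (m j)
    rw [h1, ih (Function.update m' j (m j)), Finset.card_insert_of_notMem hj]
    simp [smul_eq_mul]
    ring

/-- The subgroup of isometries fixing a given vector. -/
private def fixG (x : V) : Subgroup (V ≃ₗᵢ[ℝ] V) where
  carrier := {w | w x = x}
  one_mem' := rfl
  mul_mem' := by
    intro a b ha hb
    simp only [Set.mem_setOf_eq] at *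
    rw [LinearIsometryEquiv.coe_mul, Function.comp_apply, hb, ha]
  inv_mem' := by
    intro a ha
    simp only [Set.mem_setOf_eq] at *
    have : a⁻¹ (a x) = x := by
      have := LinearIsometryEquiv.coe_mul a⁻¹ a
      rw [inv_mul_cancel] at this
      calc a⁻¹ (a x) = (1 : V ≃ₗᵢ[ℝ] V) x := by rw [← Function.comp_apply (f := ⇑a⁻¹), ← this]
        _ = x := rfl
    rwa [ha] at this

/-- Key vanishing lemma: if the reflections with roots in `R` all lie in `W` and `R` spans `V`,
then for any nonempty `S`, the sum over `W` of the determinant-like quantities vanishes. -/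
private lemma sum_det_piecewise_eq_zero
    (W : Subgroup (V ≃ₗᵢ[ℝ] V)) [Fintype W]
    {R : Set V} (hR : ∀ v ∈ R, Submodule.reflection (ℝ ∙ v)ᗮ ∈ W)
    (hspan : Submodule.span ℝ R = ⊤)
    {n : ℕ} (b : Module.Basis (Fin n) ℝ V)
    {S : Finset (Fin n)} (hS : S.Nonempty) (x : Fin n → V) :
    ∑ w : W, b.det (S.piecewise (fun i => (w : V ≃ₗᵢ[ℝ] V) (x i)) ⇑b) = 0 := by
  classical
  obtain ⟨i₀, hi₀⟩ := hS
  set G : (Fin n → V) → ℝ :=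
    fun y => ∑ w : W, b.det (S.piecewise (fun i => (w : V ≃ₗᵢ[ℝ] V) (y i)) ⇑b) with hG
  show G x = 0
  -- G only depends on values on S
  have P0 : ∀ y z : Fin n → V, (∀ i ∈ S, y i = z i) → G y = G z := by
    intro y z h
    refine Finset.sum_congr rfl fun w _ => ?_
    congr 1
    exact S.piecewise_congr (fun i hi => by rw [h i hi]) (fun _ _ => rfl)
  -- update inside S commutes with the piecewise construction
  have P1 : ∀ (w : V ≃ₗᵢ[ℝ] V) (y : Fin n → V) (v : V),
      S.piecewise (fun i => w (Function.update y i₀ v i)) ⇑b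
        = Function.update (S.piecewise (fun i => w (y i)) ⇑b) i₀ (w v) := by
    intro w y v
    funext i
    by_cases hii : i = i₀
    · subst hii
      simp [Finset.piecewise_eq_of_mem _ _ _ hi₀]
    · rw [Function.update_of_ne hii]
      by_cases hiS : i ∈ S
      · rw [Finset.piecewise_eq_of_mem _ _ _ hiS, Finset.piecewise_eq_of_mem _ _ _ hiS,
          Function.update_of_ne hii]
      · rw [Finset.piecewise_eq_of_notMem _ _ _ hiS, Finset.piecewise_eq_of_notMem _ _ _ hiS]
  have Padd : ∀ (y : Fin n → V) (u v : V),
      G (Function.update y i₀ (u + v)) = G (Function.update y i₀ u)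
        + G (Function.update y i₀ v) := by
    intro y u v
    simp only [hG]
    rw [← Finset.sum_add_distrib]
    refine Finset.sum_congr rfl fun w _ => ?_
    rw [P1, P1, P1, map_add, b.det.map_update_add]
  have Psmul : ∀ (y : Fin n → V) (c : ℝ) (v : V),
      G (Function.update y i₀ (c • v)) = c * G (Function.update y i₀ v) := by
    intro y c v
    simp only [hG]
    rw [Finset.mul_sum]
    refine Finset.sum_congr rfl fun w _ => ?_
    rw [P1, P1, map_smul, b.det.map_update_smul, smul_eq_mul]
  have Pzero : ∀ y : Fin n → V, G (Function.update y i₀ 0) = 0 := by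
    intro y
    simp only [hG]
    refine Finset.sum_eq_zero fun w _ => ?_
    rw [P1, map_zero, b.det.map_update_zero]
  -- two equal entries inside S kill G
  have Peq : ∀ (y : Fin n → V) (i j : Fin n), i ∈ S → j ∈ S → i ≠ j → y i = y j → G y = 0 := by
    intro y i j hi hj hij hy
    refine Finset.sum_eq_zero fun w _ => ?_
    refine b.det.map_eq_zero_of_eq _ ?_ hij
    rw [Finset.piecewise_eq_of_mem _ _ _ hi, Finset.piecewise_eq_of_mem _ _ _ hj, hy]
  -- invariance under W
  have Pinv : ∀ s : W, ∀ y : Fin n → V, G (fun i => (s : V ≃ₗᵢ[ℝ] V) (y i)) = G y := by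
    intro s y
    simp only [hG]
    refine Fintype.sum_equiv (Equiv.mulRight s) _ _ fun w => ?_
    congr 1
  -- the key reflection-based vanishing
  have Aux : ∀ (v : V), v ≠ 0 → Submodule.reflection (ℝ ∙ v)ᗮ ∈ W →
      ∀ T : Finset (Fin n), ∀ y : Fin n → V, y i₀ = v →
        (∀ i ∈ S, i ≠ i₀ → i ∉ T → y i ∈ (ℝ ∙ v)ᗮ) → G y = 0 := by
    intro v hv hvW T
    induction T using Finset.induction_on with
    | empty =>
      intro y hy hH
      have h1 : G y = G (fun i => Submodule.reflection (ℝ ∙ v)ᗮ (y i)) :=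
        (Pinv ⟨Submodule.reflection (ℝ ∙ v)ᗮ, hvW⟩ y).symm
      have h2 : G (fun i => Submodule.reflection (ℝ ∙ v)ᗮ (y i)) = G (Function.update y i₀ (-v)) := by
        refine P0 _ _ fun i hiS => ?_
        by_cases hii : i = i₀
        · subst hii
          rw [hy, Function.update_self]
          exact Submodule.reflection_orthogonalComplement_singleton_eq_neg v
        · rw [Function.update_of_ne hii]
          exact Submodule.reflection_mem_subspace_eq_self
            (hH i hiS hii (Finset.notMem_empty i))
      have h3 : G (Function.update y i₀ (-v)) = - G (Function.update y i₀ v) := by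
        have := Psmul y (-1) v
        simpa using this
      have h4 : Function.update y i₀ v = y := by
        rw [← hy]; exact Function.update_eq_self i₀ y
      rw [h4] at h3
      have h5 : G y = - G y := (h1.trans h2).trans h3
      linarith
    | @insert a T ha ih =>
      intro y hy hH
      by_cases haS : a ∈ S
      · by_cases hai : a = i₀
        · subst hai
          exact ih y hy fun i hi hii hiT =>
            hH i hi hii (by simp [Finset.mem_insert, hii, hiT])
        · -- decompose the `a` coordinate
          set c : ℝ := ⟪v, y a⟫_ℝ / ⟪v, v⟫_ℝ with hc
          set h : V := y a - c • v with hh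
          have hvv : ⟪v, v⟫_ℝ ≠ 0 := fun hz => hv (inner_self_eq_zero.mp hz)
          have hhH : h ∈ (ℝ ∙ v)ᗮ := by
            rw [Submodule.mem_orthogonal_singleton_iff_inner_right]
            rw [hh, inner_sub_right, real_inner_smul_right, hc]
            field_simp
            ring
          have hya : y a = h + c • v := by rw [hh]; abel
          -- multilinearity at slot a
          have P1a : ∀ (w : V ≃ₗᵢ[ℝ] V) (z : Fin n → V) (u : V),
              S.piecewise (fun i => w (Function.update z a u i)) ⇑b
                = Function.update (S.piecewise (fun i => w (z i)) ⇑b) a (w u) := by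
            intro w z u
            funext i
            by_cases hii : i = a
            · subst hii
              simp [Finset.piecewise_eq_of_mem _ _ _ haS]
            · rw [Function.update_of_ne hii]
              by_cases hiS : i ∈ S
              · rw [Finset.piecewise_eq_of_mem _ _ _ hiS, Finset.piecewise_eq_of_mem _ _ _ hiS,
                  Function.update_of_ne hii]
              · rw [Finset.piecewise_eq_of_notMem _ _ _ hiS,
                  Finset.piecewise_eq_of_notMem _ _ _ hiS]
          have e1 : G y = G (Function.update y a h) + c * G (Function.update y a v) := by
            have e0 : G y = G (Function.update y a (h + c • v)) := by
              rw [← hya, Function.update_eq_self]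
            rw [e0]
            have eadd : G (Function.update y a (h + c • v))
                = G (Function.update y a h) + G (Function.update y a (c • v)) := by
              simp only [hG]
              rw [← Finset.sum_add_distrib]
              refine Finset.sum_congr rfl fun w _ => ?_
              rw [P1a, P1a, P1a, map_add, b.det.map_update_add]
            have esmul : G (Function.update y a (c • v)) = c * G (Function.update y a v) := by
              simp only [hG]
              rw [Finset.mul_sum]
              refine Finset.sum_congr rfl fun w _ => ?_
              rw [P1a, P1a, map_smul, b.det.map_update_smul, smul_eq_mul]
            rw [eadd, esmul]
          have e2 : G (Function.update y a v) = 0 := by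
            refine Peq _ a i₀ haS hi₀ hai ?_
            rw [Function.update_self, Function.update_of_ne (Ne.symm hai), hy]
          have e3 : G (Function.update y a h) = 0 := by
            refine ih _ ?_ ?_
            · rw [Function.update_of_ne (Ne.symm hai), hy]
            · intro i hi hii hiT
              by_cases hia : i = a
              · subst hia
                rw [Function.update_self]
                exact hhH
              · rw [Function.update_of_ne hia]
                exact hH i hi hii (by simp [Finset.mem_insert, hia, hiT])
          rw [e1, e2, e3]
          ring
      · exact ih y hy fun i hi hii hiT =>
          hH i hi hii (by simp [Finset.mem_insert, hiT]; rintro rfl; exact haS hi)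
  -- span induction
  have hx0 : x i₀ ∈ Submodule.span ℝ R := hspan ▸ Submodule.mem_top
  have key : ∀ y : V, y ∈ Submodule.span ℝ R → G (Function.update x i₀ y) = 0 := by
    intro y hy
    induction hy using Submodule.span_induction with
    | mem v hv =>
      by_cases hv0 : v = 0
      · subst hv0; exact Pzero x
      · refine Aux v hv0 (hR v hv) Finset.univ _ (Function.update_self i₀ v x) ?_
        intro i _ _ hiT
        exact absurd (Finset.mem_univ i) hiT
    | zero => exact Pzero x
    | add u v hu hv hGu hGv => rw [Padd, hGu, hGv]; ring
    | smul c u hu hGu => rw [Psmul, hGu]; ring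
  have := key (x i₀) hx0
  rwa [Function.update_eq_self] at this

theorem sum_det_id_sub_eq_card (W : Subgroup (V ≃ₗᵢ[ℝ] V)) [Fintype W]
    (hgen : W = Subgroup.closure { w : V ≃ₗᵢ[ℝ] V | w ∈ W ∧ IsHyperplaneReflection w })
    (hess : ∀ v : V, (∀ w ∈ W, w v = v) → v = 0) :
    ∑ w : W, LinearMap.det
        ((1 : V →ₗ[ℝ] V) - (w : V ≃ₗᵢ[ℝ] V).toLinearEquiv.toLinearMap)
      = (Fintype.card W : ℝ) := by
  classical
  set R : Set V := {v : V | Submodule.reflection (ℝ ∙ v)ᗮ ∈ W} with hRdef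
  have hR : ∀ v ∈ R, Submodule.reflection (ℝ ∙ v)ᗮ ∈ W := fun v hv => hv
  -- the roots span V
  have hspan : Submodule.span ℝ R = ⊤ := by
    rw [← Submodule.orthogonal_eq_bot_iff, Submodule.eq_bot_iff]
    intro x hx
    refine hess x ?_
    intro w hw
    have hsub : {w : V ≃ₗᵢ[ℝ] V | w ∈ W ∧ IsHyperplaneReflection w} ⊆ (fixG x : Set _) := by
      rintro s ⟨hsW, v, hv, rfl⟩
      show Submodule.reflection (ℝ ∙ v)ᗮ x = x
      refine Submodule.reflection_mem_subspace_eq_self ?_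
      rw [Submodule.mem_orthogonal_singleton_iff_inner_right]
      have hvR : v ∈ R := hsW
      exact hx v (Submodule.subset_span hvR)
    have : w ∈ fixG x := (Subgroup.closure_le (fixG x)).mpr hsub (hgen ▸ hw)
    exact this
  set n := Module.finrank ℝ V with hn
  set b : Module.Basis (Fin n) ℝ V := Module.finBasis ℝ V with hb
  -- determinant expansion
  have hdet : ∀ w : W,
      LinearMap.det ((1 : V →ₗ[ℝ] V) - (w : V ≃ₗᵢ[ℝ] V).toLinearEquiv.toLinearMap)
        = ∑ S : Finset (Fin n), (-1 : ℝ) ^ S.card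
            * b.det (S.piecewise (fun i => (w : V ≃ₗᵢ[ℝ] V) (b i)) ⇑b) := by
    intro w
    set φ := (1 : V →ₗ[ℝ] V) - (w : V ≃ₗᵢ[ℝ] V).toLinearEquiv.toLinearMap with hφ
    have h1 : b.det (⇑φ ∘ ⇑b) = LinearMap.det φ := by
      rw [Module.Basis.det_comp_basis, Module.Basis.equiv_refl]
      simp
    rw [← h1]
    have h2 : ⇑φ ∘ ⇑b
        = (fun i => (-1 : ℝ) • ((w : V ≃ₗᵢ[ℝ] V) (b i))) + ⇑b := by
      funext i
      simp [hφ, sub_eq_add_neg, add_comm]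
    rw [h2]
    have h3 := (b.det.toMultilinearMap).map_add_univ
      (fun i => (-1 : ℝ) • ((w : V ≃ₗᵢ[ℝ] V) (b i))) ⇑b
    simp only [AlternatingMap.coe_multilinearMap] at h3
    rw [h3]
    refine Finset.sum_congr rfl fun S _ => ?_
    have h4 := aux_pw_smul (b.det.toMultilinearMap) (-1)
      (fun i => (w : V ≃ₗᵢ[ℝ] V) (b i)) S ⇑b
    simp only [AlternatingMap.coe_multilinearMap] at h4
    exact h4
  calc ∑ w : W, LinearMap.det
        ((1 : V →ₗ[ℝ] V) - (w : V ≃ₗᵢ[ℝ] V).toLinearEquiv.toLinearMap)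
      = ∑ w : W, ∑ S : Finset (Fin n), (-1 : ℝ) ^ S.card
          * b.det (S.piecewise (fun i => (w : V ≃ₗᵢ[ℝ] V) (b i)) ⇑b) :=
        Finset.sum_congr rfl fun w _ => hdet w
    _ = ∑ S : Finset (Fin n), (-1 : ℝ) ^ S.card
          * ∑ w : W, b.det (S.piecewise (fun i => (w : V ≃ₗᵢ[ℝ] V) (b i)) ⇑b) := by
        rw [Finset.sum_comm]
        exact Finset.sum_congr rfl fun S _ => by rw [Finset.mul_sum]
    _ = (Fintype.card W : ℝ) := by
        have hz : ∀ S ∈ (Finset.univ : Finset (Finset (Fin n))), S ≠ ∅ →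
            (-1 : ℝ) ^ S.card
              * ∑ w : W, b.det (S.piecewise (fun i => (w : V ≃ₗᵢ[ℝ] V) (b i)) ⇑b) = 0 := by
          intro S _ hSne
          rw [sum_det_piecewise_eq_zero W hR hspan b
            (Finset.nonempty_iff_ne_empty.mpr hSne) ⇑b, mul_zero]
        rw [Finset.sum_eq_single_of_mem (∅ : Finset (Fin n)) (Finset.mem_univ _) hz]
        simp [Finset.piecewise_empty, Module.Basis.det_self]
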